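/- arXiv:2301.03246 — 2 statements merged into one kernel-verified Lean document; each statement's English description precedes it below -/
import Mathlib

section
/- Pathwise ACE formula for step treatments: let A: ℝ → ℝ be continuous with A(Δ)=0 for Δ ≤ 0, and suppose for each single event time τ, E[Y_τ(t) - Y_∅(t)] = -∫_τ^t A(t-s) ds. Then under additivity, for any two finite event-time configurations with step functions n(·), n'(·) (counting functions), E[Y_{n(·)}(t) - Y_{n'(·)}(t)] = -∫₀^t A(t-s)·{n(s) - n'(s)} ds. -/
open MeasureTheory intervalIntegral

/-- The counting function of a fixed finite configuration of event times. -/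
noncomputable def countFn (l : List ℝ) (s : ℝ) : ℝ :=
  (l.map (fun τ => if τ ≤ s then (1:ℝ) else 0)).sum

lemma indListInt (t : ℝ) (A : ℝ → ℝ) (hA : Continuous A) (τ : ℝ) :
    IntervalIntegrable (fun s => A (t - s) * (if τ ≤ s then (1:ℝ) else 0)) volume 0 t := by
  have hg : IntervalIntegrable (fun s => A (t - s)) volume 0 t :=
    (hA.comp (continuous_const.sub continuous_id)).intervalIntegrable 0 t
  have : (fun s => A (t - s) * (if τ ≤ s then (1:ℝ) else 0))
      = (Set.Ici τ).indicator (fun s => A (t - s)) := by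
    funext s
    by_cases h : τ ≤ s <;> simp [Set.indicator, h]
  rw [this]
  exact ⟨hg.1.indicator measurableSet_Ici, hg.2.indicator measurableSet_Ici⟩

lemma countInt (t : ℝ) (A : ℝ → ℝ) (hA : Continuous A) (l : List ℝ) :
    IntervalIntegrable (fun s => A (t - s) * countFn l s) volume 0 t := by
  induction l with
  | nil => simpa [countFn] using intervalIntegrable_const (c := (0:ℝ)) (μ := volume) (a := 0) (b := t)
  | cons τ l ih =>
    have h := (indListInt t A hA τ).add ih
    have : (fun s => A (t - s) * countFn (τ :: l) s)
        = fun s => A (t - s) * (if τ ≤ s then (1:ℝ) else 0) + A (t - s) * countFn l s := by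
      funext s; simp [countFn, mul_add]
    rw [this]; exact h

lemma singleInt (t : ℝ) (A : ℝ → ℝ) (hA : Continuous A) (τ : ℝ) (h0 : 0 ≤ τ) (hτ : τ ≤ t) :
    (∫ s in (0:ℝ)..t, A (t - s) * (if τ ≤ s then (1:ℝ) else 0)) = ∫ s in τ..t, A (t - s) := by
  have hs1 : Set.uIcc (0:ℝ) τ ⊆ Set.uIcc (0:ℝ) t := by
    rw [Set.uIcc_of_le h0, Set.uIcc_of_le (h0.trans hτ)]
    exact Set.Icc_subset_Icc le_rfl hτ
  have hs2 : Set.uIcc τ t ⊆ Set.uIcc (0:ℝ) t := by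
    rw [Set.uIcc_of_le hτ, Set.uIcc_of_le (h0.trans hτ)]
    exact Set.Icc_subset_Icc h0 le_rfl
  have hi1 := (indListInt t A hA τ).mono_set hs1
  have hi2 := (indListInt t A hA τ).mono_set hs2
  rw [← intervalIntegral.integral_add_adjacent_intervals hi1 hi2]
  have h1 : (∫ s in (0:ℝ)..τ, A (t - s) * (if τ ≤ s then (1:ℝ) else 0)) = 0 := by
    rw [intervalIntegral.integral_congr_ae (g := fun _ => (0:ℝ))]
    · simp
    · have hne : ∀ᵐ s : ℝ, s ≠ τ := by
        refine MeasureTheory.ae_iff.mpr ?_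
        simpa using measure_singleton τ
      filter_upwards [hne] with s hs hmem
      have : s < τ := lt_of_le_of_ne ((Set.mem_uIoc.mp hmem).elim (fun h => h.2)
        (fun h => absurd (h.2.trans h0) (not_le.mpr h.1))) hs
      simp [not_le.mpr this]
  have h2 : (∫ s in τ..t, A (t - s) * (if τ ≤ s then (1:ℝ) else 0)) = ∫ s in τ..t, A (t - s) := by
    apply intervalIntegral.integral_congr
    intro s hs
    rw [Set.uIcc_of_le hτ] at hs
    simp [hs.1]
  rw [h1, h2, zero_add]

lemma keySum (t : ℝ) (A : ℝ → ℝ) (hA : Continuous A) (Eff : ℝ → ℝ)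
    (hEff : ∀ τ : ℝ, Eff τ = -∫ s in τ..t, A (t - s)) (l : List ℝ)
    (hl : ∀ τ ∈ l, 0 ≤ τ ∧ τ ≤ t) :
    (l.map Eff).sum = -∫ s in (0:ℝ)..t, A (t - s) * countFn l s := by
  induction l with
  | nil => simp [countFn]
  | cons τ l ih =>
    have hτ := hl τ (by simp)
    have hmem : ∀ τ' ∈ l, 0 ≤ τ' ∧ τ' ≤ t := fun τ' h => hl τ' (List.mem_cons_of_mem _ h)
    have heq : (fun s => A (t - s) * countFn (τ :: l) s)
        = fun s => A (t - s) * (if τ ≤ s then (1:ℝ) else 0) + A (t - s) * countFn l s := by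
      funext s; simp [countFn, mul_add]
    rw [List.map_cons, List.sum_cons, ih hmem, hEff τ,
      ← singleInt t A hA τ hτ.1 hτ.2]
    have := intervalIntegral.integral_add (indListInt t A hA τ) (countInt t A hA l)
    rw [show (∫ s in (0:ℝ)..t, A (t - s) * countFn (τ :: l) s)
        = ∫ s in (0:ℝ)..t, (A (t - s) * (if τ ≤ s then (1:ℝ) else 0) + A (t - s) * countFn l s)
      from by rw [heq], this]
    ring
/-- Pathwise ACE formula for step treatments (Proposition 2): with a continuous
causal kernel `A` (`A(Δ)=0` for `Δ ≤ 0`), if the expected single-event effect is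
`Eff τ = E[Y_τ(t) - Y_∅(t)] = -∫_τ^t A(t-s) ds` and additivity holds (the
expected effect `e l` of a configuration `l` relative to the null process is the
sum of single-event effects), then for any two configurations,
`E[Y_{n(·)}(t) - Y_{n'(·)}(t)] = -∫₀^t A(t-s) (n(s) - n'(s)) ds`. -/
theorem pathwise_ace_step_treatments
    (t : ℝ) (ht : 0 ≤ t) (A : ℝ → ℝ) (hA_cont : Continuous A)
    (hA0 : ∀ Δ : ℝ, Δ ≤ 0 → A Δ = 0)
    (Eff : ℝ → ℝ) (e : List ℝ → ℝ)
    (hEff : ∀ τ : ℝ, Eff τ = -∫ s in τ..t, A (t - s))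
    (hadd : ∀ l : List ℝ, e l = (l.map Eff).sum)
    (l l' : List ℝ)
    (hl : ∀ τ ∈ l, 0 ≤ τ ∧ τ ≤ t) (hl' : ∀ τ ∈ l', 0 ≤ τ ∧ τ ≤ t) :
    e l - e l' = -∫ s in (0:ℝ)..t, A (t - s) * (countFn l s - countFn l' s) := by
  rw [hadd l, hadd l', keySum t A hA_cont Eff hEff l hl, keySum t A hA_cont Eff hEff l' hl']
  have hsub : (∫ s in (0:ℝ)..t, A (t - s) * (countFn l s - countFn l' s))
      = (∫ s in (0:ℝ)..t, A (t - s) * countFn l s) - ∫ s in (0:ℝ)..t, A (t - s) * countFn l' s := by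
    rw [← intervalIntegral.integral_sub (countInt t A hA_cont l) (countInt t A hA_cont l')]
    congr 1
    funext s
    ring
  rw [hsub]
  ring
end

section
/- ACER in the nonlinear additive-confounding model: if E[Y_τ(t)] = ∫₀^t φ(μ + g(s-τ)) ds + C(t), where φ is C¹, g is C¹ with g(Δ)=0 for Δ ≤ 0, and C(t) does not depend on τ, then ∂E[Y_τ(t)]/∂τ = φ(μ) - φ(μ + g(t-τ)) for τ ∈ [0, t]. -/
open MeasureTheory intervalIntegral

/-- ACER in the nonlinear additive-confounding model (Proposition 4(a)): if
`E[Y_τ(t)] = ∫₀^t φ(μc + g(s-τ)) ds + C(t)` with `φ, g` C¹ and `g(Δ)=0` for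
`Δ ≤ 0`, then `∂E[Y_τ(t)]/∂τ = φ(μc) - φ(μc + g(t-τ))` for `τ ∈ [0,t]`. -/
theorem acer_nonlinear_additive_model
    (φ g : ℝ → ℝ) (hφ : ContDiff ℝ 1 φ) (hg : ContDiff ℝ 1 g)
    (hg0 : ∀ Δ : ℝ, Δ ≤ 0 → g Δ = 0)
    (μc t : ℝ) (C : ℝ → ℝ) :
    ∀ τ ∈ Set.Icc (0:ℝ) t,
      HasDerivAt (fun τ' => (∫ s in (0:ℝ)..t, φ (μc + g (s - τ'))) + C t)
        (φ μc - φ (μc + g (t - τ))) τ := by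
  intro τ hτ
  set h : ℝ → ℝ := fun u => φ (μc + g u) with hh_def
  have hh : Continuous h := hφ.continuous.comp (continuous_const.add hg.continuous)
  set H : ℝ → ℝ := fun u => ∫ x in (0:ℝ)..u, h x with hH_def
  have key : ∀ u : ℝ, HasDerivAt H (h u) u := by
    intro u
    exact intervalIntegral.integral_hasDerivAt_right
      (hh.intervalIntegrable _ _) (hh.stronglyMeasurableAtFilter _ _) hh.continuousAt
  have heq : (fun τ' => (∫ s in (0:ℝ)..t, φ (μc + g (s - τ'))) + C t)
      = fun τ' => (H (t - τ') - H (-τ')) + C t := by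
    funext τ'
    have h1 : (∫ s in (0:ℝ)..t, φ (μc + g (s - τ')))
        = ∫ u in (0 - τ')..(t - τ'), h u := by
      simpa [hh_def] using intervalIntegral.integral_comp_sub_right (a := 0) (b := t) (fun u => h u) τ'
    have h2 : H (t - τ') - H (-τ') = ∫ u in (-τ')..(t - τ'), h u := by
      rw [hH_def]
      exact intervalIntegral.integral_interval_sub_left
        (hh.intervalIntegrable _ _) (hh.intervalIntegrable _ _)
    rw [h1, h2]
    norm_num
  rw [heq]
  have hlin : HasDerivAt (fun τ' : ℝ => t - τ') (-1) τ := by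
    simpa using (hasDerivAt_id τ).const_sub t
  have hlin2 : HasDerivAt (fun τ' : ℝ => -τ') (-1) τ := by
    exact hasDerivAt_neg τ
  have d1 : HasDerivAt (fun τ' => H (t - τ')) (h (t - τ) * (-1)) τ :=
    (key (t - τ)).comp τ hlin
  have d2 : HasDerivAt (fun τ' => H (-τ')) (h (-τ) * (-1)) τ :=
    (key (-τ)).comp τ hlin2
  have := (d1.sub d2).add_const (C t)
  have hτ0 : g (-τ) = 0 := hg0 _ (by linarith [hτ.1])
  have : HasDerivAt (fun τ' => (H (t - τ') - H (-τ')) + C t)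
      (h (t - τ) * (-1) - h (-τ) * (-1)) τ := this
  convert this using 1
  simp [hh_def, hτ0]
  ring
end
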